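/- Let k be a field and a < b, c < d in ℝ. The graded internal hom of one-parameter interval modules satisfies Hom_underline(k[a,b), k[c,d)) ≅ k[max{c−a, d−b}, d−a). -/

import Mathlib

open CategoryTheory

noncomputable section
attribute [local instance] Classical.propDecidable
set_option linter.unusedSectionVars false

variable (R : Type) [Ring R] {P : Type} [Preorder P]

/-- Condition that a subset is order-convex. -/
def IsConvexSet (I : Set P) : Prop := ∀ ⦃x y z : P⦄, x ∈ I → z ∈ I → x ≤ y → y ≤ z → y ∈ I

/-- The value of the interval persistence module at a point. -/
def intervalObj (I : Set P) (a : P) : Submodule R R :=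
  if a ∈ I then (⊤ : Submodule R R) else ⊥

lemma intervalObj_eq_zero {I : Set P} {a : P} (h : a ∉ I) (x : intervalObj R I a) :
    x = 0 := by
  have hx := x.2
  simp only [intervalObj, if_neg h, Submodule.mem_bot] at hx
  exact Subtype.ext hx

/-- The structure map of the interval module between two degrees. -/
def intervalMapAux (I : Set P) (a b : P) :
    (intervalObj R I a) →ₗ[R] (intervalObj R I b) :=
  if h : a ∈ I ∧ b ∈ I then
    Submodule.inclusion (by simp [intervalObj, h.1, h.2])
  else 0

lemma intervalMapAux_coe {I : Set P} {a b : P} (ha : a ∈ I) (hb : b ∈ I)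
    (x : intervalObj R I a) : ((intervalMapAux R I a b x : R)) = (x : R) := by
  simp [intervalMapAux, ha, hb]

lemma intervalMapAux_of_not {I : Set P} {a b : P} (h : ¬(a ∈ I ∧ b ∈ I))
    (x : intervalObj R I a) : intervalMapAux R I a b x = 0 := by
  simp [intervalMapAux, h]

/-- The interval (indicator) persistence module of a convex set `I`,
as a functor from the preorder `P` to `R`-modules. -/
def intervalModule (I : Set P) (hI : IsConvexSet I) : P ⥤ ModuleCat R where
  obj a := ModuleCat.of R (intervalObj R I a)
  map {a b} f := ModuleCat.ofHom (intervalMapAux R I a b)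
  map_id a := by
    ext x : 2
    by_cases h : a ∈ I
    · exact Subtype.ext (intervalMapAux_coe R h h x)
    · rw [intervalObj_eq_zero R h x]
      simp
  map_comp {a b c} f g := by
    ext x : 2
    show intervalMapAux R I a c x = intervalMapAux R I b c (intervalMapAux R I a b x)
    by_cases ha : a ∈ I
    · by_cases hc : c ∈ I
      · have hb : b ∈ I := hI ha hc (leOfHom f) (leOfHom g)
        apply Subtype.ext
        rw [intervalMapAux_coe R ha hc, intervalMapAux_coe R hb hc,
          intervalMapAux_coe R ha hb]
      · rw [intervalMapAux_of_not R (fun h => hc h.2),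
          intervalMapAux_of_not R (fun h => hc h.2)]
    · rw [intervalObj_eq_zero R ha x]
      simp

end

lemma IsConvexSet.of_ordConnected {P : Type} [Preorder P] {s : Set P}
    (h : s.OrdConnected) : IsConvexSet s :=
  fun _ _ _ hx hz hxy hyz => h.out hx hz ⟨hxy, hyz⟩

open CategoryTheory

noncomputable section
variable (k : Type) [Field k]

/-- The translation functor `a ↦ a + s` on `(ℝ,≤)`. -/
def shiftFunctor' (s : ℝ) : ℝ ⥤ ℝ :=
  Monotone.functor (f := fun a => a + s) (fun _ _ h => add_le_add_left h s)

/-- For `s ≤ t`, the canonical natural transformation `N(s) ⟶ N(t)` between shifts. -/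
def shiftTrans (N : ℝ ⥤ ModuleCat k) {s t : ℝ} (h : s ≤ t) :
    shiftFunctor' s ⋙ N ⟶ shiftFunctor' t ⋙ N where
  app a := N.map (homOfLE (add_le_add_right h a))
  naturality {a b} f := by
    dsimp [shiftFunctor']
    rw [← N.map_comp, ← N.map_comp]
    congr 1

lemma shiftTrans_eq_id (N : ℝ ⥤ ModuleCat k) {s : ℝ} (h : s ≤ s) :
    shiftTrans k N h = 𝟙 _ := by
  apply NatTrans.ext
  funext a
  show N.map (homOfLE (add_le_add_right h a)) = _
  rw [show (homOfLE (add_le_add_right h a) : a + s ⟶ a + s) = 𝟙 (a + s) from rfl, N.map_id]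
  rfl

lemma shiftTrans_comp (N : ℝ ⥤ ModuleCat k) {s t u : ℝ} (h : s ≤ t) (h' : t ≤ u)
    (h'' : s ≤ u) :
    shiftTrans k N h ≫ shiftTrans k N h' = shiftTrans k N h'' := by
  apply NatTrans.ext
  funext a
  rw [NatTrans.comp_app]
  show N.map (homOfLE (add_le_add_right h a)) ≫ N.map (homOfLE (add_le_add_right h' a)) =
    N.map (homOfLE (add_le_add_right h'' a))
  rw [← N.map_comp]
  congr 1

/-- The graded internal hom of persistence modules:
`Hom(M,N)_s = Hom(M, N(s))`, the space of natural transformations into the shift. -/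
def homUnderline (M N : ℝ ⥤ ModuleCat k) : ℝ ⥤ ModuleCat k where
  obj s := ModuleCat.of k (M ⟶ shiftFunctor' s ⋙ N)
  map {s t} f := ModuleCat.ofHom
    { toFun := fun α => α ≫ shiftTrans k N (leOfHom f)
      map_add' := fun α β => Preadditive.add_comp _ _ _ _ _ _
      map_smul' := fun c α => Linear.smul_comp _ _ _ _ _ _ }
  map_id s := by
    ext α : 2
    show α ≫ shiftTrans k N (leOfHom (𝟙 s)) = α
    rw [shiftTrans_eq_id, Category.comp_id]
  map_comp {s t u} f g := by
    ext α : 2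
    show α ≫ shiftTrans k N (leOfHom (f ≫ g)) =
      (α ≫ shiftTrans k N (leOfHom f)) ≫ shiftTrans k N (leOfHom g)
    rw [Category.assoc, shiftTrans_comp k N (leOfHom f) (leOfHom g) (leOfHom (f ≫ g))]

end

noncomputable section HomIntervalAux
open CategoryTheory

/-- Abbreviation for the interval module of `[x, y)`. -/
abbrev IM (k : Type) [Field k] (x y : ℝ) : ℝ ⥤ ModuleCat k :=
  intervalModule k (Set.Ico x y) (.of_ordConnected Set.ordConnected_Ico)

variable {k : Type} [Field k]

lemma intervalObj_mem {I : Set ℝ} {x : ℝ} (h : x ∈ I) (t : k) :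
    t ∈ intervalObj k I x := by
  simp [intervalObj, h]

/-- A canonical element of the interval module. -/
def eltI {I : Set ℝ} {x : ℝ} (h : x ∈ I) (t : k) : intervalObj k I x :=
  ⟨t, intervalObj_mem h t⟩

@[simp] lemma eltI_coe {I : Set ℝ} {x : ℝ} (h : x ∈ I) (t : k) :
    ((eltI h t : intervalObj k I x) : k) = t := rfl

variable {a b c d : ℝ}

lemma app_apply {s : ℝ} (hab : a < b)
    (α : IM k a b ⟶ shiftFunctor' s ⋙ IM k c d)
    {x : ℝ} (hx : x ∈ Set.Ico a b) (v : intervalObj k (Set.Ico a b) x) :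
    α.app x v = (v : k) • intervalMapAux k (Set.Ico c d) (a + s) (x + s)
      (α.app a (eltI (Set.left_mem_Ico.mpr hab) (1 : k))) := by
  have ha : a ∈ Set.Ico a b := Set.left_mem_Ico.mpr hab
  have hv : v = (v : k) • eltI hx (1 : k) := Subtype.ext (by simp)
  have h2 : α.app x (intervalMapAux k (Set.Ico a b) a x (eltI ha (1 : k))) =
      intervalMapAux k (Set.Ico c d) (a + s) (x + s) (α.app a (eltI ha (1 : k))) :=
    ConcreteCategory.congr_hom (α.naturality (homOfLE hx.1)) (eltI ha (1 : k))
  rw [show intervalMapAux k (Set.Ico a b) a x (eltI ha (1 : k)) = eltI hx (1 : k) from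
    Subtype.ext (by rw [eltI_coe]; exact intervalMapAux_coe k ha hx _)] at h2
  conv_lhs => rw [hv]
  exact (map_smul (α.app x).hom _ _).trans (congrArg _ h2)

lemma app_vanish (hab : a < b) (hcd : c < d) {s : ℝ}
    (hs : s ∉ Set.Ico (max (c - a) (d - b)) (d - a))
    (α : IM k a b ⟶ shiftFunctor' s ⋙ IM k c d) (x : ℝ)
    (v : intervalObj k (Set.Ico a b) x) : α.app x v = 0 := by
  by_cases hx : x ∈ Set.Ico a b
  swap
  · rw [intervalObj_eq_zero k hx v]
    exact map_zero (α.app x).hom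
  by_cases hxs : x + s ∈ Set.Ico c d
  swap
  · exact intervalObj_eq_zero k hxs _
  rw [Set.mem_Ico, not_and_or, not_le, not_lt] at hs
  rcases hs with hs | hs
  · rcases lt_max_iff.mp hs with hs' | hs'
    · -- s < c - a : the source of the shift map dies at `a`
      have has : a + s ∉ Set.Ico c d := fun h => by
        have := h.1; linarith
      rw [app_apply hab α hx v,
        intervalObj_eq_zero k has (α.app a (eltI (Set.left_mem_Ico.mpr hab) (1 : k))),
        map_zero, smul_zero]
      rfl
    · -- s < d - b : use the point y = max b (c - s)
      set y := max b (c - s) with hy_def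
      have hxy : x ≤ y := le_trans hx.2.le (le_max_left _ _)
      have hy : y ∉ Set.Ico a b := fun h => absurd h.2 (not_lt.mpr (le_max_left _ _))
      have hys : y + s ∈ Set.Ico c d := by
        constructor
        · have : c - s ≤ y := le_max_right _ _
          linarith
        · have h1 : b < d - s := by linarith
          have h2 : c - s < d - s := by linarith
          have : y < d - s := max_lt h1 h2
          linarith
      have h2 : α.app y (intervalMapAux k (Set.Ico a b) x y v) =
          intervalMapAux k (Set.Ico c d) (x + s) (y + s) (α.app x v) :=
        ConcreteCategory.congr_hom (α.naturality (homOfLE hxy)) v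
      rw [intervalMapAux_of_not k (fun h => hy h.2) v] at h2
      erw [map_zero] at h2
      apply Subtype.ext
      have h4 := intervalMapAux_coe k hxs hys (α.app x v)
      rw [← h2] at h4
      rw [← h4]
      rfl
  · -- d - a ≤ s
    exfalso
    have := hxs.2
    have := hx.1
    linarith

/-- Component of the inverse natural transformation. -/
def psiApp (s : ℝ) (t : k) (x : ℝ) :
    intervalObj k (Set.Ico a b) x →ₗ[k] intervalObj k (Set.Ico c d) (x + s) where
  toFun v := if h : x + s ∈ Set.Ico c d then eltI h (t * (v : k)) else 0
  map_add' v w := by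
    by_cases h : x + s ∈ Set.Ico c d
    · simp only [dif_pos h]
      exact Subtype.ext (by simp [mul_add])
    · simp only [dif_neg h, add_zero]
  map_smul' r v := by
    by_cases h : x + s ∈ Set.Ico c d
    · simp only [dif_pos h, RingHom.id_apply]
      apply Subtype.ext
      simp [mul_left_comm]
    · simp only [dif_neg h, RingHom.id_apply, smul_zero]

@[simp] lemma psiApp_apply (s : ℝ) (t : k) (x : ℝ) (v : intervalObj k (Set.Ico a b) x) :
    psiApp (a := a) (b := b) (c := c) (d := d) s t x v =
      if h : x + s ∈ Set.Ico c d then eltI h (t * (v : k)) else 0 := rfl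

lemma psiApp_natural {s : ℝ} (hs : s ∈ Set.Ico (max (c - a) (d - b)) (d - a)) (t : k)
    {x y : ℝ} (hxy : x ≤ y) :
    (psiApp (a := a) (b := b) (c := c) (d := d) s t y).comp
        (intervalMapAux k (Set.Ico a b) x y) =
      (intervalMapAux k (Set.Ico c d) (x + s) (y + s)).comp
        (psiApp (a := a) (b := b) (c := c) (d := d) s t x) := by
  apply LinearMap.ext
  intro v
  simp only [LinearMap.comp_apply]
  by_cases hys : y + s ∈ Set.Ico c d
  swap
  · exact (intervalObj_eq_zero k hys _).trans (intervalObj_eq_zero k hys _).symm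
  by_cases hx : x ∈ Set.Ico a b
  swap
  · rw [intervalObj_eq_zero k hx v]
    simp only [map_zero]
  by_cases hy : y ∈ Set.Ico a b
  · have hxs : x + s ∈ Set.Ico c d := by
      constructor
      · have h1 : c - a ≤ s := le_trans (le_max_left _ _) hs.1
        have := hx.1
        linarith
      · have := hys.2
        linarith
    rw [psiApp_apply, psiApp_apply, dif_pos hys, dif_pos hxs]
    apply Subtype.ext
    rw [eltI_coe, intervalMapAux_coe k hxs hys, eltI_coe, intervalMapAux_coe k hx hy]
  · exfalso
    have hby : b ≤ y := by
      by_contra hby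
      exact hy ⟨le_trans hx.1 hxy, not_le.mp hby⟩
    have hdb : d - b ≤ s := le_trans (le_max_right _ _) hs.1
    have := hys.2
    linarith

/-- The inverse: from a scalar `t` to a natural transformation. -/
def psi {s : ℝ} (hs : s ∈ Set.Ico (max (c - a) (d - b)) (d - a)) (t : k) :
    IM k a b ⟶ shiftFunctor' s ⋙ IM k c d where
  app x := ModuleCat.ofHom (psiApp (a := a) (b := b) (c := c) (d := d) s t x)
  naturality {_ _} f := ModuleCat.hom_ext (psiApp_natural hs t (leOfHom f))

/-- Component of the evaluation linear map. -/
def PhiApp (hab : a < b) (hcd : c < d) (s : ℝ) :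
    (IM k a b ⟶ shiftFunctor' s ⋙ IM k c d) →ₗ[k]
      intervalObj k (Set.Ico (max (c - a) (d - b)) (d - a)) s where
  toFun α := ⟨(α.app a (eltI (Set.left_mem_Ico.mpr hab) (1 : k))).val, by
    by_cases hs : s ∈ Set.Ico (max (c - a) (d - b)) (d - a)
    · exact intervalObj_mem hs _
    · rw [app_vanish hab hcd hs α a _]
      exact Submodule.zero_mem _⟩
  map_add' α β := Subtype.ext (by
    show ((α + β).app a (eltI (Set.left_mem_Ico.mpr hab) (1 : k))).val = _
    rw [NatTrans.app_add]
    rfl)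
  map_smul' r α := Subtype.ext (by
    show ((r • α).app a (eltI (Set.left_mem_Ico.mpr hab) (1 : k))).val = _
    rw [NatTrans.app_smul]
    rfl)

@[simp] lemma PhiApp_val (hab : a < b) (hcd : c < d) (s : ℝ)
    (α : IM k a b ⟶ shiftFunctor' s ⋙ IM k c d) :
    (PhiApp hab hcd s α).val =
      (α.app a (eltI (Set.left_mem_Ico.mpr hab) (1 : k))).val := rfl

/-- The natural transformation realizing the isomorphism. -/
def Phi (hab : a < b) (hcd : c < d) :
    homUnderline k (IM k a b) (IM k c d) ⟶ IM k (max (c - a) (d - b)) (d - a) where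
  app s := ModuleCat.ofHom (PhiApp hab hcd s)
  naturality {s u} f := by
    have ha : a ∈ Set.Ico a b := Set.left_mem_Ico.mpr hab
    apply ModuleCat.hom_ext
    apply LinearMap.ext
    intro α
    by_cases hu : u ∈ Set.Ico (max (c - a) (d - b)) (d - a)
    swap
    · exact (intervalObj_eq_zero k hu _).trans (intervalObj_eq_zero k hu _).symm
    apply Subtype.ext
    show (intervalMapAux k (Set.Ico c d) (a + s) (a + u)
        (α.app a (eltI ha (1 : k)))).val =
      (intervalMapAux k (Set.Ico (max (c - a) (d - b)) (d - a)) s u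
        (PhiApp hab hcd s α)).val
    by_cases hs : s ∈ Set.Ico (max (c - a) (d - b)) (d - a)
    · have has : a + s ∈ Set.Ico c d := by
        have h1 : c - a ≤ s := le_trans (le_max_left _ _) hs.1
        have h2 := hs.2
        exact ⟨by linarith, by linarith⟩
      have hau : a + u ∈ Set.Ico c d := by
        have h1 : c - a ≤ u := le_trans (le_max_left _ _) hu.1
        have h2 := hu.2
        exact ⟨by linarith, by linarith⟩
      exact (intervalMapAux_coe k has hau _).trans
        (intervalMapAux_coe k hs hu (PhiApp hab hcd s α)).symm
    · rw [intervalMapAux_of_not k (fun h => hs h.1) (PhiApp hab hcd s α),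
        app_vanish hab hcd hs α a (eltI ha (1 : k))]
      exact congrArg Subtype.val (map_zero (intervalMapAux k (Set.Ico c d) (a + s) (a + u)))

lemma Phi_bijective (hab : a < b) (hcd : c < d) (s : ℝ) :
    Function.Bijective ((Phi (k := k) (a := a) (b := b) (c := c) (d := d) hab hcd).app s) := by
  have ha : a ∈ Set.Ico a b := Set.left_mem_Ico.mpr hab
  constructor
  · intro α β h
    have hval := congrArg Subtype.val h
    have h' : α.app a (eltI ha (1 : k)) = β.app a (eltI ha (1 : k)) :=
      Subtype.ext hval
    apply NatTrans.ext
    funext x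
    apply ModuleCat.hom_ext
    apply LinearMap.ext
    intro v
    by_cases hx : x ∈ Set.Ico a b
    · rw [app_apply hab α hx v, app_apply hab β hx v, h']
    · rw [intervalObj_eq_zero k hx v]
      exact (map_zero _).trans (map_zero _).symm
  · intro w
    by_cases hs : s ∈ Set.Ico (max (c - a) (d - b)) (d - a)
    · refine ⟨psi hs w.val, ?_⟩
      have has : a + s ∈ Set.Ico c d := by
        have h1 : c - a ≤ s := le_trans (le_max_left _ _) hs.1
        have h2 := hs.2
        exact ⟨by linarith, by linarith⟩
      apply Subtype.ext
      show (psiApp (a := a) (b := b) (c := c) (d := d) s w.val a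
          (eltI ha (1 : k))).val = w.val
      rw [psiApp_apply, dif_pos has]
      simp
    · refine ⟨0, ?_⟩
      rw [intervalObj_eq_zero k hs w]
      exact map_zero _

end HomIntervalAux

open CategoryTheory in
/-- Graded internal hom of interval modules:
`Hom(k[a,b), k[c,d)) ≅ k[max{c−a, d−b}, d−a)`. -/
theorem homUnderline_interval (k : Type) [Field k] (a b c d : ℝ)
    (hab : a < b) (hcd : c < d) :
    Nonempty
      (homUnderline k (intervalModule k (Set.Ico a b) (.of_ordConnected Set.ordConnected_Ico))
          (intervalModule k (Set.Ico c d) (.of_ordConnected Set.ordConnected_Ico)) ≅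
        intervalModule k (Set.Ico (max (c - a) (d - b)) (d - a))
          (.of_ordConnected Set.ordConnected_Ico)) := by
  haveI : ∀ s : ℝ, IsIso ((Phi (k := k) (a := a) (b := b) (c := c) (d := d) hab hcd).app s) :=
    fun s => (ConcreteCategory.isIso_iff_bijective _).mpr (Phi_bijective hab hcd s)
  haveI : IsIso (Phi (k := k) (a := a) (b := b) (c := c) (d := d) hab hcd) :=
    NatIso.isIso_of_isIso_app _
  exact ⟨asIso (Phi hab hcd)⟩
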